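/- Fix φ > 0, α > 0, and σ > 0, and let g(β) = √(φ² − 2φα·cos(β) + α²) (the distance to the origin after a step of length α at angle β from distance φ). Let β_RW be uniformly distributed on [−π, π] and let β_PA have the distribution of a normal N(0, σ²) random variable truncated (conditioned) to [−π, π]. Then g(β_RW) stochastically dominates g(β_PA): for every real x, P(g(β_RW) ≥ x) ≥ P(g(β_PA) ≥ x). -/

import Mathlib

open MeasureTheory ProbabilityTheory Real
open scoped ENNReal

noncomputable section

/-- The uniform distribution on `[−π, π]` (the angle law of the unbiased random walk). -/
def uniformAngle : Measure ℝ :=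
  ENNReal.ofReal (1 / (2 * Real.pi)) • volume.restrict (Set.Icc (-Real.pi) Real.pi)

/-- The normal distribution `N(0, v)` (variance `v`) truncated (conditioned) to `[−π, π]`:
its density is proportional to `exp(−u²/(2v))` on `[−π, π]` and zero outside. -/
def truncNormalVar (v : ℝ) : Measure ℝ :=
  (volume.restrict (Set.Icc (-Real.pi) Real.pi)).withDensity fun u =>
    ENNReal.ofReal (Real.exp (-(u ^ 2) / (2 * v)) /
      ∫ w in Set.Icc (-Real.pi) Real.pi, Real.exp (-(w ^ 2) / (2 * v)))

namespace RWAux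

lemma measurable_abs_set (t : ℝ) : MeasurableSet {β : ℝ | t ≤ |β|} :=
  measurableSet_le measurable_const measurable_id.abs

lemma trunc_congr (v : ℝ) {S T : Set ℝ} (hS : MeasurableSet S) (hT : MeasurableSet T)
    (h : S ∩ Set.Icc (-Real.pi) Real.pi = T ∩ Set.Icc (-Real.pi) Real.pi) :
    truncNormalVar v S = truncNormalVar v T := by
  unfold truncNormalVar
  rw [withDensity_apply _ hS, withDensity_apply _ hT,
    Measure.restrict_restrict hS, Measure.restrict_restrict hT, h]

lemma unif_congr {S T : Set ℝ} (hS : MeasurableSet S) (hT : MeasurableSet T)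
    (h : S ∩ Set.Icc (-Real.pi) Real.pi = T ∩ Set.Icc (-Real.pi) Real.pi) :
    uniformAngle S = uniformAngle T := by
  unfold uniformAngle
  rw [Measure.smul_apply, Measure.smul_apply,
    Measure.restrict_apply hS, Measure.restrict_apply hT, h]

lemma key (v : ℝ) (hv : 0 < v) (t : ℝ) (ht0 : 0 ≤ t) (htp : t ≤ Real.pi) :
    truncNormalVar v {β : ℝ | t ≤ |β|} ≤ uniformAngle {β : ℝ | t ≤ |β|} := by
  have hπ := Real.pi_pos
  set f : ℝ → ℝ := fun u => Real.exp (-(u ^ 2) / (2 * v)) with hfdef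
  have hf_cont : Continuous f := by
    apply Real.continuous_exp.comp
    continuity
  have hf_pos : ∀ u, 0 < f u := fun u => Real.exp_pos _
  have hf_even : ∀ u, f (-u) = f u := by
    intro u
    show Real.exp _ = Real.exp _
    congr 1
    ring
  have hint : ∀ a b : ℝ, IntervalIntegrable f volume a b :=
    fun a b => hf_cont.intervalIntegrable a b
  set Z : ℝ := ∫ w in Set.Icc (-Real.pi) Real.pi, f w with hZdef
  have hZ' : Z = ∫ w in (-Real.pi)..Real.pi, f w := by
    rw [hZdef, integral_Icc_eq_integral_Ioc,
      ← intervalIntegral.integral_of_le (by linarith : -Real.pi ≤ Real.pi)]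
  have hZpos : 0 < Z := by
    rw [hZ']
    exact intervalIntegral.intervalIntegral_pos_of_pos_on (hint _ _)
      (fun x _ => hf_pos x) (by linarith)
  set I₀ : ℝ := ∫ u in (0:ℝ)..t, f u with hI0def
  set I₁ : ℝ := ∫ u in t..Real.pi, f u with hI1def
  have hneg : ∫ x in (-Real.pi)..(0:ℝ), f x = ∫ x in (0:ℝ)..Real.pi, f x := by
    have h := intervalIntegral.integral_comp_neg (a := (0:ℝ)) (b := Real.pi) f
    simp only [hf_even, neg_zero] at h
    exact h.symm
  have hZsplit : Z = 2 * (I₀ + I₁) := by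
    have h1 : I₀ + I₁ = ∫ x in (0:ℝ)..Real.pi, f x :=
      intervalIntegral.integral_add_adjacent_intervals (hint _ _) (hint _ _)
    have h2 : (∫ x in (-Real.pi)..(0:ℝ), f x) + ∫ x in (0:ℝ)..Real.pi, f x
        = ∫ x in (-Real.pi)..Real.pi, f x :=
      intervalIntegral.integral_add_adjacent_intervals (hint _ _) (hint _ _)
    rw [hZ', ← h2, hneg, ← h1]; ring
  have hI1nn : 0 ≤ I₁ :=
    intervalIntegral.integral_nonneg htp (fun u _ => (hf_pos u).le)
  have hI0nn : 0 ≤ I₀ :=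
    intervalIntegral.integral_nonneg ht0 (fun u _ => (hf_pos u).le)
  have hI1ub : I₁ ≤ (Real.pi - t) * f t := by
    have h := intervalIntegral.integral_mono_on htp (hint t Real.pi)
      (intervalIntegrable_const (c := f t)) (fun u hu => by
        simp only [hfdef]
        apply Real.exp_le_exp.2
        have : t ^ 2 ≤ u ^ 2 := by nlinarith [hu.1]
        have h2v : (0:ℝ) < 2 * v := by linarith
        apply div_le_div_of_nonneg_right ?_ h2v.le |>.trans_eq rfl
        · linarith)
    simpa [smul_eq_mul] using h
  have hI0lb : t * f t ≤ I₀ := by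
    have h := intervalIntegral.integral_mono_on ht0
      (intervalIntegrable_const (c := f t)) (hint 0 t) (fun u hu => by
        simp only [hfdef]
        apply Real.exp_le_exp.2
        have : u ^ 2 ≤ t ^ 2 := by nlinarith [hu.1, hu.2]
        have h2v : (0:ℝ) < 2 * v := by linarith
        apply div_le_div_of_nonneg_right ?_ h2v.le |>.trans_eq rfl
        · linarith)
    simpa [smul_eq_mul] using h
  have hkey : t * I₁ ≤ (Real.pi - t) * I₀ := by
    have hft : 0 < f t := hf_pos t
    nlinarith [mul_le_mul_of_nonneg_left hI1ub ht0,
      mul_le_mul_of_nonneg_left hI0lb (by linarith : (0:ℝ) ≤ Real.pi - t)]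
  -- compute the truncated-normal measure bound
  have hA := measurable_abs_set t
  have hsub : {β : ℝ | t ≤ |β|} ∩ Set.Icc (-Real.pi) Real.pi ⊆
      Set.Icc (-Real.pi) (-t) ∪ Set.Icc t Real.pi := by
    rintro β ⟨h1, h2, h3⟩
    simp only [Set.mem_setOf_eq] at h1
    rcases abs_cases β with ⟨he, _⟩ | ⟨he, _⟩
    · right; exact ⟨by rw [he] at h1; exact h1, h3⟩
    · left; constructor
      · exact h2
      · rw [he] at h1; linarith
  have hIccneg : ∫ a in Set.Icc (-Real.pi) (-t), f a = I₁ := by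
    rw [integral_Icc_eq_integral_Ioc,
      ← intervalIntegral.integral_of_le (by linarith : -Real.pi ≤ -t),
      ← intervalIntegral.integral_comp_neg f]
    simp only [hf_even, hI1def]
  have hIccpos : ∫ a in Set.Icc t Real.pi, f a = I₁ := by
    rw [integral_Icc_eq_integral_Ioc,
      ← intervalIntegral.integral_of_le htp, hI1def]
  have hnnae : ∀ s : Set ℝ, 0 ≤ᶠ[ae (volume.restrict s)] fun a => f a / Z :=
    fun s => Filter.Eventually.of_forall fun a => div_nonneg (hf_pos a).le hZpos.le
  have hpiece : ∀ a b : ℝ, ∫⁻ u in Set.Icc a b, ENNReal.ofReal (f u / Z)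
      = ENNReal.ofReal ((∫ u in Set.Icc a b, f u) / Z) := by
    intro a b
    rw [← MeasureTheory.ofReal_integral_eq_lintegral_ofReal
      ((hf_cont.div_const Z).integrableOn_Icc) (hnnae _)]
    congr 1
    rw [integral_div]
  have htrunc : truncNormalVar v {β : ℝ | t ≤ |β|}
      ≤ ENNReal.ofReal (I₁ / Z) + ENNReal.ofReal (I₁ / Z) := by
    unfold truncNormalVar
    rw [withDensity_apply _ hA, Measure.restrict_restrict hA]
    calc ∫⁻ u in {β : ℝ | t ≤ |β|} ∩ Set.Icc (-Real.pi) Real.pi,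
          ENNReal.ofReal (f u / Z)
        ≤ ∫⁻ u in Set.Icc (-Real.pi) (-t) ∪ Set.Icc t Real.pi,
          ENNReal.ofReal (f u / Z) := lintegral_mono_set hsub
      _ ≤ (∫⁻ u in Set.Icc (-Real.pi) (-t), ENNReal.ofReal (f u / Z))
          + ∫⁻ u in Set.Icc t Real.pi, ENNReal.ofReal (f u / Z) :=
          lintegral_union_le _ _ _
      _ = ENNReal.ofReal (I₁ / Z) + ENNReal.ofReal (I₁ / Z) := by
          rw [hpiece, hpiece, hIccneg, hIccpos]
  -- compute the uniform measure lower bound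
  have hunif : ENNReal.ofReal (1 / (2 * Real.pi)) *
      (ENNReal.ofReal (Real.pi - t) + ENNReal.ofReal (Real.pi - t))
      ≤ uniformAngle {β : ℝ | t ≤ |β|} := by
    unfold uniformAngle
    rw [Measure.smul_apply, Measure.restrict_apply hA, smul_eq_mul]
    apply mul_le_mul_right ?_
    have hsub2 : Set.Ico (-Real.pi) (-t) ∪ Set.Icc t Real.pi ⊆
        {β : ℝ | t ≤ |β|} ∩ Set.Icc (-Real.pi) Real.pi := by
      rintro β (⟨h1, h2⟩ | ⟨h1, h2⟩)
      · refine ⟨?_, h1, by linarith⟩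
        have : |β| = -β := abs_of_neg (by linarith)
        rw [Set.mem_setOf_eq, this]; linarith
      · refine ⟨?_, by linarith, h2⟩
        have : |β| = β := abs_of_nonneg (by linarith)
        rw [Set.mem_setOf_eq, this]; exact h1
    have hdisj : Disjoint (Set.Ico (-Real.pi) (-t)) (Set.Icc t Real.pi) := by
      rw [Set.disjoint_left]
      rintro β ⟨h1, h2⟩ ⟨h3, h4⟩
      linarith
    calc ENNReal.ofReal (Real.pi - t) + ENNReal.ofReal (Real.pi - t)
        = volume (Set.Ico (-Real.pi) (-t) ∪ Set.Icc t Real.pi) := by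
          rw [measure_union hdisj measurableSet_Icc, Real.volume_Ico, Real.volume_Icc]
          congr 2 <;> ring
      _ ≤ volume ({β : ℝ | t ≤ |β|} ∩ Set.Icc (-Real.pi) Real.pi) :=
          measure_mono hsub2
  refine htrunc.trans (le_trans ?_ hunif)
  rw [← ENNReal.ofReal_add (by positivity) (by positivity),
    ← ENNReal.ofReal_add (by linarith) (by linarith),
    ← ENNReal.ofReal_mul (by positivity)]
  apply ENNReal.ofReal_le_ofReal
  have hIZ : 0 < I₀ + I₁ := by nlinarith
  rw [← add_div, div_le_iff₀ hZpos]
  have hrw : 1 / (2 * Real.pi) * ((Real.pi - t) + (Real.pi - t)) = (Real.pi - t) / Real.pi := by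
    field_simp
    ring
  rw [hrw, div_mul_eq_mul_div, le_div_iff₀ hπ]
  nlinarith [hkey]

end RWAux

/-- The post-step distance `g(β) = √(φ² − 2φα cos β + α²)` under a uniform
angle stochastically dominates the same quantity under a truncated normal `N(0, σ²)` angle:
`P(g(β_RW) ≥ x) ≥ P(g(β_PA) ≥ x)` for every `x`. -/
theorem rw_distance_dominates_truncnormal (φ α σ : ℝ) (hφ : 0 < φ) (hα : 0 < α)
    (hσ : 0 < σ) :
    ∀ x : ℝ,
      truncNormalVar (σ ^ 2) {β | x ≤ Real.sqrt (φ ^ 2 - 2 * φ * α * Real.cos β + α ^ 2)} ≤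
        uniformAngle {β | x ≤ Real.sqrt (φ ^ 2 - 2 * φ * α * Real.cos β + α ^ 2)} := by
  intro x
  have hπ := Real.pi_pos
  have hv : (0:ℝ) < σ ^ 2 := by positivity
  have hq0 : ∀ β : ℝ, 0 ≤ φ ^ 2 - 2 * φ * α * Real.cos β + α ^ 2 := fun β => by
    nlinarith [Real.cos_le_one β, sq_nonneg (φ - α), mul_pos hφ hα]
  have hS : MeasurableSet {β : ℝ | x ≤ Real.sqrt (φ ^ 2 - 2 * φ * α * Real.cos β + α ^ 2)} := by
    apply measurableSet_le measurable_const
    apply Continuous.measurable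
    continuity
  by_cases hx : x ≤ 0
  · have hSet : {β : ℝ | x ≤ Real.sqrt (φ ^ 2 - 2 * φ * α * Real.cos β + α ^ 2)}
        ∩ Set.Icc (-Real.pi) Real.pi
        = {β : ℝ | (0:ℝ) ≤ |β|} ∩ Set.Icc (-Real.pi) Real.pi := by
      have h1 : {β : ℝ | x ≤ Real.sqrt (φ ^ 2 - 2 * φ * α * Real.cos β + α ^ 2)} = Set.univ :=
        Set.eq_univ_of_forall fun β => le_trans hx (Real.sqrt_nonneg _)
      have h2 : {β : ℝ | (0:ℝ) ≤ |β|} = Set.univ :=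
        Set.eq_univ_of_forall fun β => abs_nonneg β
      rw [h1, h2]
    rw [RWAux.trunc_congr _ hS (RWAux.measurable_abs_set 0) hSet,
      RWAux.unif_congr hS (RWAux.measurable_abs_set 0) hSet]
    exact RWAux.key _ hv 0 le_rfl hπ.le
  · push_neg at hx
    set c : ℝ := (φ ^ 2 + α ^ 2 - x ^ 2) / (2 * φ * α) with hc
    by_cases hc1 : c < -1
    · have hSempty : {β : ℝ | x ≤ Real.sqrt (φ ^ 2 - 2 * φ * α * Real.cos β + α ^ 2)} = ∅ := by
        ext β
        simp only [Set.mem_setOf_eq, Set.mem_empty_iff_false, iff_false, not_le]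
        have h2 : φ ^ 2 + α ^ 2 - x ^ 2 < -1 * (2 * φ * α) := by
          rw [hc, div_lt_iff₀ (by positivity)] at hc1
          linarith
        have hlt : φ ^ 2 - 2 * φ * α * Real.cos β + α ^ 2 < x ^ 2 := by
          nlinarith [Real.neg_one_le_cos β, mul_pos hφ hα]
        exact (Real.sqrt_lt' hx).2 hlt
      rw [hSempty]
      simp
    · push_neg at hc1
      have hiff : ∀ β ∈ Set.Icc (-Real.pi) Real.pi,
          (x ≤ Real.sqrt (φ ^ 2 - 2 * φ * α * Real.cos β + α ^ 2) ↔ Real.arccos c ≤ |β|) := by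
        intro β hβ
        have habs : |β| ∈ Set.Icc (0:ℝ) Real.pi :=
          ⟨abs_nonneg _, abs_le.2 ⟨hβ.1, hβ.2⟩⟩
        rw [Real.le_sqrt hx.le (hq0 β)]
        have h1 : x ^ 2 ≤ φ ^ 2 - 2 * φ * α * Real.cos β + α ^ 2 ↔ Real.cos β ≤ c := by
          rw [hc, le_div_iff₀ (by positivity)]
          constructor <;> intro h <;> nlinarith
        rw [h1, ← Real.cos_abs β]
        by_cases hcle : c ≤ 1
        · have hcc : Real.cos (Real.arccos c) = c := Real.cos_arccos hc1 hcle
          nth_rewrite 1 [← hcc]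
          exact Real.strictAntiOn_cos.le_iff_ge habs
            ⟨Real.arccos_nonneg c, Real.arccos_le_pi c⟩
        · push_neg at hcle
          constructor
          · intro _
            rw [Real.arccos_eq_zero.2 hcle.le]
            exact abs_nonneg β
          · intro _
            calc Real.cos |β| ≤ 1 := Real.cos_le_one _
              _ ≤ c := hcle.le
      have hSet : {β : ℝ | x ≤ Real.sqrt (φ ^ 2 - 2 * φ * α * Real.cos β + α ^ 2)}
          ∩ Set.Icc (-Real.pi) Real.pi
          = {β : ℝ | Real.arccos c ≤ |β|} ∩ Set.Icc (-Real.pi) Real.pi := by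
        ext β
        simp only [Set.mem_inter_iff, Set.mem_setOf_eq]
        constructor
        · rintro ⟨h1, h2⟩; exact ⟨(hiff β h2).1 h1, h2⟩
        · rintro ⟨h1, h2⟩; exact ⟨(hiff β h2).2 h1, h2⟩
      rw [RWAux.trunc_congr _ hS (RWAux.measurable_abs_set _) hSet,
        RWAux.unif_congr hS (RWAux.measurable_abs_set _) hSet]
      exact RWAux.key _ hv _ (Real.arccos_nonneg c) (Real.arccos_le_pi c)

end
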